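/- Let Q be a finite acyclic quiver, V a representation of Q over ℂ whose dimension vector is the all-one vector (so each V(a) is a scalar V(a) ∈ ℂ), and σ : Q₀ → ℤ a weight. Then the infimum over x : Q₀ → ℝ of ( Σ_{a∈Q₁} |V(a)|²·exp(x_{ha} − x_{ta}) + exp(Σ_{i∈Q₀} σ(i)·x_i) ) is strictly positive if and only if Σ_{i∈Q₀} σ(i) = 0 and Σ_{i∈X} σ(i) ≤ 0 for every subset X ⊆ Q₀ that is a lower set of the support quiver of V, i.e., every X such that there is no arc a with V(a) ≠ 0, ta ∈ X, and ha ∉ X. -/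

import Mathlib

/-- A list of arcs (with tail map `tl` and head map `hd`) forms a directed closed walk. -/
def IsClosedWalk {I A : Type} (tl hd : A → I) (l : List A) (hne : l ≠ []) : Prop :=
  l.Chain' (fun a b => hd a = tl b) ∧ hd (l.getLast hne) = tl (l.head hne)

/-- A quiver is acyclic if it has no directed closed walk. -/
def IsAcyclic {I A : Type} (tl hd : A → I) : Prop :=
  ∀ (l : List A) (hne : l ≠ []), ¬ IsClosedWalk tl hd l hne

/-- King's criterion for a representation of an acyclic quiver with all-one dimension
vector: the infimum over `x : Q₀ → ℝ` of
`Σ_a |V(a)|² exp(x_{ha} − x_{ta}) + exp(Σ_i σ(i) x_i)` is strictly positive iff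
`σ(Q₀) = 0` and `σ(X) ≤ 0` for every lower set `X` of the support quiver of `V`. -/


lemma exists_walk {I A : Type} (tl hd : A → I) {i j : I}
    (h : Relation.TransGen (fun i j => ∃ a, tl a = i ∧ hd a = j) i j) :
    ∃ (l : List A) (hne : l ≠ []), l.Chain' (fun a b => hd a = tl b) ∧
      tl (l.head hne) = i ∧ hd (l.getLast hne) = j := by
  induction h with
  | single hr =>
      obtain ⟨a, ha1, ha2⟩ := hr
      exact ⟨[a], by simp, List.isChain_singleton a, by simpa, by simpa⟩
  | tail _ hr ih =>
      obtain ⟨a, ha1, ha2⟩ := hr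
      obtain ⟨l, hne, hchain, hhead, hlast⟩ := ih
      refine ⟨l ++ [a], by simp, ?_, ?_, ?_⟩
      · unfold List.Chain'; rw [List.isChain_append]
        refine ⟨hchain, List.isChain_singleton a, ?_⟩
        intro x hx y hy
        simp at hy
        subst hy
        rw [List.getLast?_eq_getLast hne] at hx
        simp at hx
        subst hx
        rw [hlast, ha1]
      · rw [List.head_append_of_ne_nil hne]; exact hhead
      · rw [List.getLast_append]; exact ha2

lemma transGen_irrefl {I A : Type} (tl hd : A → I) (hacyc : IsAcyclic tl hd) (i : I) :
    ¬ Relation.TransGen (fun i j => ∃ a, tl a = i ∧ hd a = j) i i := by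
  intro h
  obtain ⟨l, hne, hchain, hhead, hlast⟩ := exists_walk tl hd h
  exact hacyc l hne ⟨hchain, by rw [hlast, hhead]⟩

lemma exists_height {I A : Type} [Fintype I] [Fintype A] (tl hd : A → I)
    (hacyc : IsAcyclic tl hd) :
    ∃ ψ : I → ℝ, ∀ a : A, ψ (hd a) < ψ (tl a) := by
  classical
  set r : I → I → Prop := fun i j => ∃ a, tl a = i ∧ hd a = j with hr
  refine ⟨fun i => -((Finset.univ.filter (fun k => Relation.TransGen r k i)).card : ℝ), ?_⟩
  intro a
  simp only [neg_lt_neg_iff, Nat.cast_lt]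
  apply Finset.card_lt_card
  constructor
  · intro k hk
    simp only [Finset.mem_filter, Finset.mem_univ, true_and] at hk ⊢
    exact hk.tail ⟨a, rfl, rfl⟩
  · intro hsub
    have h1 : tl a ∈ Finset.univ.filter (fun k => Relation.TransGen r k (hd a)) := by
      simp only [Finset.mem_filter, Finset.mem_univ, true_and]
      exact Relation.TransGen.single ⟨a, rfl, rfl⟩
    have h2 := hsub h1
    simp only [Finset.mem_filter, Finset.mem_univ, true_and] at h2
    exact transGen_irrefl tl hd hacyc _ h2


open Filter

lemma ray_lemma {I A : Type} [Fintype I] [Fintype A] (tl hd : A → I)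
    (Vm : A → ℂ) (σ : I → ℤ) (z : I → ℝ)
    (hz : ∀ a, Vm a ≠ 0 → z (hd a) < z (tl a))
    (hs : ∑ i, (σ i : ℝ) * z i < 0) :
    ¬ (0 < ⨅ x : I → ℝ,
        ((∑ a : A, ‖Vm a‖ ^ 2 * Real.exp (x (hd a) - x (tl a))) +
          Real.exp (∑ i : I, (σ i : ℝ) * x i))) := by
  intro hpos
  set F : (I → ℝ) → ℝ := fun x =>
    ((∑ a : A, ‖Vm a‖ ^ 2 * Real.exp (x (hd a) - x (tl a))) +
      Real.exp (∑ i : I, (σ i : ℝ) * x i)) with hF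
  have hbdd : BddBelow (Set.range F) := by
    refine ⟨0, ?_⟩
    rintro y ⟨x, rfl⟩
    have h1 : 0 ≤ ∑ a : A, ‖Vm a‖ ^ 2 * Real.exp (x (hd a) - x (tl a)) :=
      Finset.sum_nonneg fun a _ => mul_nonneg (by positivity) (Real.exp_pos _).le
    exact add_nonneg h1 (Real.exp_pos _).le
  have hten : Tendsto (fun t : ℝ => F (fun i => t * z i)) atTop (nhds 0) := by
    have : Tendsto (fun t : ℝ =>
        (∑ a : A, ‖Vm a‖ ^ 2 * Real.exp (t * z (hd a) - t * z (tl a))) +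
          Real.exp (∑ i : I, (σ i : ℝ) * (t * z i))) atTop (nhds (0 + 0)) := by
      apply Tendsto.add
      · have h0 : (0 : ℝ) = ∑ a : A, (0 : ℝ) := by simp
        rw [h0]
        apply tendsto_finset_sum
        intro a _
        by_cases hva : Vm a = 0
        · simp [hva]
        · have hd0 : z (hd a) - z (tl a) < 0 := sub_neg.mpr (hz a hva)
          have h1 : Tendsto (fun t : ℝ => t * (z (hd a) - z (tl a))) atTop atBot :=
            Tendsto.atTop_mul_const_of_neg hd0 tendsto_id
          have h2 : Tendsto (fun t : ℝ => Real.exp (t * z (hd a) - t * z (tl a)))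
              atTop (nhds 0) := by
            have := Real.tendsto_exp_atBot.comp h1
            refine this.congr fun t => ?_
            simp only [Function.comp_apply]
            ring_nf
          simpa using h2.const_mul (‖Vm a‖ ^ 2)
      · have h1 : Tendsto (fun t : ℝ => t * (∑ i : I, (σ i : ℝ) * z i)) atTop atBot :=
          Tendsto.atTop_mul_const_of_neg hs tendsto_id
        have := Real.tendsto_exp_atBot.comp h1
        refine this.congr fun t => ?_
        simp only [Function.comp_apply, Finset.mul_sum]
        congr 1
        apply Finset.sum_congr rfl
        intro i _
        ring
    simpa using this
  have := (hten.eventually (gt_mem_nhds hpos)).exists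
  obtain ⟨t, ht⟩ := this
  exact absurd (ciInf_le hbdd (fun i => t * z i)) (not_le.mpr ht)


lemma layercake {I A : Type} [Fintype I] (tl hd : A → I) (Vm : A → ℂ) (σ : I → ℤ)
    (hsum : (∑ i : I, σ i) = 0)
    (hX : ∀ X : Finset I, (∀ a : A, Vm a ≠ 0 → tl a ∈ X → hd a ∈ X) →
      (∑ i ∈ X, σ i) ≤ 0)
    (x : I → ℝ) (hx : ∀ a : A, Vm a ≠ 0 → x (hd a) ≤ x (tl a)) :
    0 ≤ ∑ i : I, (σ i : ℝ) * x i := by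
  classical
  generalize hn : (Finset.image x Finset.univ).card = n
  induction n using Nat.strong_induction_on generalizing x with
  | _ n ih =>
  rcases Nat.lt_or_ge n 2 with hlt | hge
  · -- x is constant (or I empty)
    rcases isEmpty_or_nonempty I with hI | hI
    · simp
    · obtain ⟨i₀⟩ := hI
      have hconst : ∀ i, x i = x i₀ := by
        intro i
        have h1 : x i ∈ Finset.image x Finset.univ := Finset.mem_image_of_mem x (Finset.mem_univ i)
        have h2 : x i₀ ∈ Finset.image x Finset.univ := Finset.mem_image_of_mem x (Finset.mem_univ i₀)
        have hcard : (Finset.image x Finset.univ).card ≤ 1 := by omega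
        exact Finset.card_le_one.mp hcard _ h1 _ h2
      have : ∑ i : I, (σ i : ℝ) * x i = (∑ i : I, (σ i : ℝ)) * x i₀ := by
        rw [Finset.sum_mul]
        exact Finset.sum_congr rfl fun i _ => by rw [hconst i]
      rw [this]
      have : (∑ i : I, (σ i : ℝ)) = 0 := by
        rw [← Int.cast_sum, hsum, Int.cast_zero]
      rw [this, zero_mul]
  · -- at least two values
    set T := Finset.image x Finset.univ with hT
    have hTne : T.Nonempty := Finset.card_pos.mp (by omega)
    set m := T.min' hTne with hm
    have hT'ne : (T.erase m).Nonempty := by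
      rw [← Finset.card_pos, Finset.card_erase_of_mem (T.min'_mem hTne)]
      omega
    set m' := (T.erase m).min' hT'ne with hm'
    have hmm' : m < m' := by
      have h1 := (T.erase m).min'_mem hT'ne
      have h2 : m' ∈ T := Finset.mem_of_mem_erase h1
      have h3 : m' ≠ m := Finset.ne_of_mem_erase h1
      exact lt_of_le_of_ne (T.min'_le _ h2) (Ne.symm h3)
    have hmin : ∀ i, m ≤ x i := fun i => T.min'_le _ (Finset.mem_image_of_mem x (Finset.mem_univ i))
    have hmin' : ∀ i, x i ≠ m → m' ≤ x i := by
      intro i hiv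
      exact (T.erase m).min'_le _ (Finset.mem_erase.mpr ⟨hiv, Finset.mem_image_of_mem x (Finset.mem_univ i)⟩)
    set x' : I → ℝ := fun i => if x i = m then m' else x i with hx'
    -- closedness of level set X₀
    set X₀ : Finset I := Finset.univ.filter (fun i => x i = m) with hX₀
    have hclosed : ∀ a : A, Vm a ≠ 0 → tl a ∈ X₀ → hd a ∈ X₀ := by
      intro a hva hta
      simp only [hX₀, Finset.mem_filter, Finset.mem_univ, true_and] at hta ⊢
      exact le_antisymm (hta ▸ hx a hva) (hmin _)
    -- monotonicity for x'
    have hx'mono : ∀ a : A, Vm a ≠ 0 → x' (hd a) ≤ x' (tl a) := by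
      intro a hva
      by_cases h1 : x (tl a) = m
      · have h2 : x (hd a) = m := by
          have := hclosed a hva (by simp [hX₀, h1])
          simpa [hX₀] using this
        simp [hx', h1, h2]
      · have h3 : x' (tl a) = x (tl a) := by simp [hx', h1]
        by_cases h2 : x (hd a) = m
        · rw [h3]; simp only [hx', h2]
          exact hmin' _ h1
        · rw [h3]; simp only [hx', if_neg h2]
          exact hx a hva
    -- image of x' is smaller
    have himg : Finset.image x' Finset.univ ⊆ T.erase m := by
      intro v hv
      obtain ⟨i, _, rfl⟩ := Finset.mem_image.mp hv
      by_cases h1 : x i = m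
      · simp only [hx', h1, if_pos]
        exact (T.erase m).min'_mem hT'ne
      · simp only [hx', if_neg h1]
        exact Finset.mem_erase.mpr ⟨h1, Finset.mem_image_of_mem x (Finset.mem_univ i)⟩
    have hcard' : (Finset.image x' Finset.univ).card < n := by
      calc (Finset.image x' Finset.univ).card ≤ (T.erase m).card := Finset.card_le_card himg
        _ < T.card := Finset.card_erase_lt_of_mem (T.min'_mem hTne)
        _ = n := hn
    have ih' := ih _ hcard' x' hx'mono rfl
    -- relate the two sums
    have hdiff : ∑ i : I, (σ i : ℝ) * x' i - ∑ i : I, (σ i : ℝ) * x i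
        = (m' - m) * ∑ i ∈ X₀, (σ i : ℝ) := by
      rw [← Finset.sum_sub_distrib, Finset.mul_sum]
      rw [← Finset.sum_filter_add_sum_filter_not Finset.univ (fun i => x i = m)
        (fun i => (σ i : ℝ) * x' i - (σ i : ℝ) * x i)]
      have h1 : ∀ i ∈ Finset.univ.filter (fun i => x i = m),
          (σ i : ℝ) * x' i - (σ i : ℝ) * x i = (m' - m) * (σ i : ℝ) := by
        intro i hi
        simp only [Finset.mem_filter, Finset.mem_univ, true_and] at hi
        simp [hx', hi]; ring
      have h2 : ∀ i ∈ Finset.univ.filter (fun i => ¬ x i = m),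
          (σ i : ℝ) * x' i - (σ i : ℝ) * x i = 0 := by
        intro i hi
        simp only [Finset.mem_filter, Finset.mem_univ, true_and] at hi
        simp [hx', hi]
      rw [Finset.sum_congr rfl h1, Finset.sum_congr rfl h2, Finset.sum_const, smul_zero, add_zero]
    have hXneg : (∑ i ∈ X₀, (σ i : ℝ)) ≤ 0 := by
      have := hX X₀ hclosed
      rw [← Int.cast_sum]
      exact_mod_cast this
    have : ∑ i : I, (σ i : ℝ) * x i
        = ∑ i : I, (σ i : ℝ) * x' i - (m' - m) * ∑ i ∈ X₀, (σ i : ℝ) := by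
      linarith [hdiff]
    rw [this]
    have h4 : (m' - m) * ∑ i ∈ X₀, (σ i : ℝ) ≤ 0 :=
      mul_nonpos_of_nonneg_of_nonpos (by linarith) hXneg
    linarith

theorem king_criterion_dim_one
    {I A : Type} [Fintype I] [Fintype A]
    (tl hd : A → I) (hacyc : IsAcyclic tl hd)
    (Vm : A → ℂ) (σ : I → ℤ) :
    (0 < ⨅ x : I → ℝ,
        ((∑ a : A, ‖Vm a‖ ^ 2 * Real.exp (x (hd a) - x (tl a))) +
          Real.exp (∑ i : I, (σ i : ℝ) * x i))) ↔
      ((∑ i : I, σ i) = 0 ∧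
        ∀ X : Finset I,
          (∀ a : A, Vm a ≠ 0 → tl a ∈ X → hd a ∈ X) →
          (∑ i ∈ X, σ i) ≤ 0) := by
  classical
  obtain ⟨ψ, hψ⟩ := exists_height tl hd hacyc
  set s : ℝ := ∑ i : I, (σ i : ℝ) * ψ i with hs
  constructor
  · intro hpos
    constructor
    · by_contra hne
      have hσR : ((∑ i : I, σ i : ℤ) : ℝ) ≠ 0 := Int.cast_ne_zero.mpr hne
      set c : ℝ := (-1 - s) / ((∑ i : I, σ i : ℤ) : ℝ) with hc
      refine ray_lemma tl hd Vm σ (fun i => ψ i + c) (fun a _ => by simpa using hψ a) ?_ hpos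
      have : ∑ i : I, (σ i : ℝ) * (ψ i + c) = s + (∑ i : I, (σ i : ℝ)) * c := by
        rw [hs, Finset.sum_mul, ← Finset.sum_add_distrib]
        exact Finset.sum_congr rfl fun i _ => by ring
      rw [this]
      have h2 : (∑ i : I, (σ i : ℝ)) = ((∑ i : I, σ i : ℤ) : ℝ) := by rw [Int.cast_sum]
      rw [h2, hc, mul_div_cancel₀ _ hσR]
      linarith
    · intro X hXcl
      by_contra hXpos
      push_neg at hXpos
      have hXpos' : (1 : ℝ) ≤ ((∑ i ∈ X, σ i : ℤ) : ℝ) := by exact_mod_cast hXpos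
      set N : ℝ := |s| + 1 with hN
      set z : I → ℝ := fun i => ψ i + N * (if i ∈ X then (-1 : ℝ) else 0) with hz
      refine ray_lemma tl hd Vm σ z ?_ ?_ hpos
      · intro a hva
        have h1 : (if hd a ∈ X then (-1 : ℝ) else 0) ≤ (if tl a ∈ X then (-1 : ℝ) else 0) := by
          by_cases h : tl a ∈ X
          · simp [h, hXcl a hva h]
          · rw [if_neg h]
            split <;> norm_num
        have h2 := hψ a
        have hN0 : (0 : ℝ) ≤ N := by positivity
        have := mul_le_mul_of_nonneg_left h1 hN0
        simp only [hz]
        linarith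
      · have hsplit : ∑ i : I, (σ i : ℝ) * z i
            = s + N * ∑ i : I, (σ i : ℝ) * (if i ∈ X then (-1 : ℝ) else 0) := by
          rw [hs, Finset.mul_sum, ← Finset.sum_add_distrib]
          refine Finset.sum_congr rfl fun i _ => ?_
          simp only [hz]
          ring
        have hind : ∑ i : I, (σ i : ℝ) * (if i ∈ X then (-1 : ℝ) else 0)
            = -((∑ i ∈ X, σ i : ℤ) : ℝ) := by
          simp only [mul_ite, mul_neg_one, mul_zero]
          rw [Finset.sum_ite_mem, Finset.univ_inter]
          push_cast
          rw [Finset.sum_neg_distrib]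
        rw [hsplit, hind]
        have hN1 : (1 : ℝ) ≤ N := by
          have := abs_nonneg s
          simp only [hN]; linarith
        have hprod : N * 1 ≤ N * ((∑ i ∈ X, σ i : ℤ) : ℝ) :=
          mul_le_mul_of_nonneg_left hXpos' (by linarith)
        have habs := le_abs_self s
        simp only [hN] at hprod ⊢
        linarith
  · rintro ⟨hsum, hX⟩
    set S : Finset A := Finset.univ.filter (fun a => Vm a ≠ 0) with hS
    set T : Finset ℝ := insert 1 (S.image (fun a => ‖Vm a‖ ^ 2)) with hT
    have hTne : T.Nonempty := ⟨1, Finset.mem_insert_self _ _⟩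
    set δ : ℝ := T.min' hTne with hδ
    have hδpos : 0 < δ := by
      rw [hδ, Finset.lt_min'_iff]
      intro v hv
      rw [hT, Finset.mem_insert] at hv
      rcases hv with rfl | hv
      · norm_num
      · obtain ⟨a, ha, rfl⟩ := Finset.mem_image.mp hv
        rw [hS, Finset.mem_filter] at ha
        exact pow_pos (norm_pos_iff.mpr ha.2) 2
    have hbound : ∀ x : I → ℝ, δ ≤
        ((∑ a : A, ‖Vm a‖ ^ 2 * Real.exp (x (hd a) - x (tl a))) +
          Real.exp (∑ i : I, (σ i : ℝ) * x i)) := by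
      intro x
      by_cases hcase : ∃ a, Vm a ≠ 0 ∧ x (tl a) ≤ x (hd a)
      · obtain ⟨a, hva, hle⟩ := hcase
        have h1 : δ ≤ ‖Vm a‖ ^ 2 := by
          apply Finset.min'_le
          rw [hT]
          exact Finset.mem_insert_of_mem (Finset.mem_image_of_mem _ (by simp [hS, hva]))
        have h2 : ‖Vm a‖ ^ 2 ≤ ‖Vm a‖ ^ 2 * Real.exp (x (hd a) - x (tl a)) := by
          apply le_mul_of_one_le_right (by positivity)
          rw [← Real.exp_zero]
          exact Real.exp_le_exp.mpr (by linarith)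
        have h3 : ‖Vm a‖ ^ 2 * Real.exp (x (hd a) - x (tl a)) ≤
            ∑ b : A, ‖Vm b‖ ^ 2 * Real.exp (x (hd b) - x (tl b)) :=
          Finset.single_le_sum (f := fun b => ‖Vm b‖ ^ 2 * Real.exp (x (hd b) - x (tl b))) (fun b _ => mul_nonneg (by positivity) (Real.exp_pos _).le)
            (Finset.mem_univ a)
        have h4 := (Real.exp_pos (∑ i : I, (σ i : ℝ) * x i)).le
        linarith
      · push_neg at hcase
        have hmono : ∀ a : A, Vm a ≠ 0 → x (hd a) ≤ x (tl a) := by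
          intro a hva
          exact (hcase a hva).le
        have h0 := layercake tl hd Vm σ hsum hX x hmono
        have h1 : (1 : ℝ) ≤ Real.exp (∑ i : I, (σ i : ℝ) * x i) := by
          rw [← Real.exp_zero]
          exact Real.exp_le_exp.mpr h0
        have h2 : δ ≤ 1 := Finset.min'_le _ _ (Finset.mem_insert_self _ _)
        have h3 : 0 ≤ ∑ a : A, ‖Vm a‖ ^ 2 * Real.exp (x (hd a) - x (tl a)) :=
          Finset.sum_nonneg fun a _ => mul_nonneg (by positivity) (Real.exp_pos _).le
        linarith
    exact lt_of_lt_of_le hδpos (le_ciInf hbound)
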